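/- Let (W,S) be a Coxeter group, let s and t be two distinct reflections of W with the order m of st finite, and let D_{s,t} be the subgroup of W generated by s and t. Then every entry of the word ρ_{s,t} = ((st)^0 s, (st)^1 s, …, (st)^{m-1} s) is a reflection of W lying in D_{s,t}, the entries are pairwise distinct, and every reflection of W lying in D_{s,t} occurs as an entry of ρ_{s,t}. -/

import Mathlib

/-- The word `ρ_{s,t} = ((st)^0 s, (st)^1 s, …, (st)^{m-1} s)`. -/
def rhoWord {W : Type*} [Group W] (s t : W) (m : ℕ) : List W :=
  (List.range m).map (fun k => (s * t) ^ k * s)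

/-- For distinct reflections `s, t` with `m = orderOf (s*t)` finite and
`D_{s,t}` the subgroup generated by `s` and `t`: every entry of `ρ_{s,t}` is a reflection
lying in `D_{s,t}`, the entries are pairwise distinct, and every reflection lying in
`D_{s,t}` occurs as an entry of `ρ_{s,t}`. -/
theorem rho_lists_reflections_of_dihedral {B W : Type*} [Group W] {M : CoxeterMatrix B}
    (cs : CoxeterSystem M W) (s t : W)
    (hs : cs.IsReflection s) (ht : cs.IsReflection t) (hst : s ≠ t)
    (hfin : IsOfFinOrder (s * t)) :
    (∀ x ∈ rhoWord s t (orderOf (s * t)),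
        cs.IsReflection x ∧ x ∈ Subgroup.closure {s, t}) ∧
    (rhoWord s t (orderOf (s * t))).Nodup ∧
    (∀ x : W, cs.IsReflection x → x ∈ Subgroup.closure {s, t} →
        x ∈ rhoWord s t (orderOf (s * t))) := by
  have hss : s * s = 1 := hs.mul_self
  have htt : t * t = 1 := ht.mul_self
  have hm0 : 0 < orderOf (s * t) := hfin.orderOf_pos
  -- conjugation by s (or t) inverts s*t
  have h1s : s * (s * t) * s⁻¹ = (s * t)⁻¹ := by
    rw [hs.inv, mul_inv_rev, hs.inv, ht.inv, ← mul_assoc, hss, one_mul]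
  have h1t : t * (s * t) * t⁻¹ = (s * t)⁻¹ := by
    rw [ht.inv, mul_inv_rev, hs.inv, ht.inv, ← mul_assoc t s t, mul_assoc (t * s) t t, htt,
      mul_one]
  have hconj : ∀ k : ℤ, s * (s * t) ^ k * s = (s * t) ^ (-k) := by
    intro k
    calc s * (s * t) ^ k * s = s * (s * t) ^ k * s⁻¹ := by rw [hs.inv]
    _ = (s * (s * t) * s⁻¹) ^ k := conj_zpow.symm
    _ = (s * t) ^ (-k) := by rw [h1s, inv_zpow, ← zpow_neg]
  have hconjt : ∀ k : ℤ, t * (s * t) ^ k * t = (s * t) ^ (-k) := by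
    intro k
    calc t * (s * t) ^ k * t = t * (s * t) ^ k * t⁻¹ := by rw [ht.inv]
    _ = (t * (s * t) * t⁻¹) ^ k := conj_zpow.symm
    _ = (s * t) ^ (-k) := by rw [h1t, inv_zpow, ← zpow_neg]
  have hmove : ∀ k : ℤ, s * (s * t) ^ k = (s * t) ^ (-k) * s := by
    intro k
    calc s * (s * t) ^ k = s * (s * t) ^ k * s * s := by rw [mul_assoc _ s s, hss, mul_one]
    _ = (s * t) ^ (-k) * s := by rw [hconj k]
  have hmovet : ∀ k : ℤ, t * (s * t) ^ k = (s * t) ^ (-k) * t := by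
    intro k
    calc t * (s * t) ^ k = t * (s * t) ^ k * t * t := by rw [mul_assoc _ t t, htt, mul_one]
    _ = (s * t) ^ (-k) * t := by rw [hconjt k]
  -- every (s*t)^k * s is a reflection
  have hr_refl : ∀ k : ℤ, cs.IsReflection ((s * t) ^ k * s) := by
    intro k
    rcases Int.even_or_odd k with ⟨j, hj⟩ | ⟨j, hj⟩
    · have heq : (s * t) ^ j * s * ((s * t) ^ j)⁻¹ = (s * t) ^ k * s := by
        rw [← zpow_neg, mul_assoc, hmove (-j), neg_neg, ← mul_assoc, ← zpow_add, ← hj]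
      exact heq ▸ hs.conj ((s * t) ^ j)
    · have heq : (s * t) ^ (j + 1) * t * ((s * t) ^ (j + 1))⁻¹ = (s * t) ^ k * s := by
        rw [← zpow_neg, mul_assoc, hmovet (-(j+1)), neg_neg, ← mul_assoc, ← zpow_add]
        have h3 : (s * t) ^ (j + 1 + (j + 1)) = (s * t) ^ k * (s * t) := by
          rw [← zpow_add_one, hj]; ring_nf
        rw [h3, mul_assoc, mul_assoc, htt, mul_one]
      exact heq ▸ ht.conj ((s * t) ^ (j + 1))
  -- the dihedral subgroup description
  let K : Subgroup W :=
    { carrier := {x | ∃ k : ℤ, x = (s * t) ^ k ∨ x = (s * t) ^ k * s}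
      one_mem' := ⟨0, Or.inl (zpow_zero _).symm⟩
      mul_mem' := by
        rintro a b ⟨j, rfl | rfl⟩ ⟨k, rfl | rfl⟩
        · exact ⟨j + k, Or.inl (zpow_add _ _ _).symm⟩
        · exact ⟨j + k, Or.inr (by rw [← mul_assoc, ← zpow_add])⟩
        · exact ⟨j - k, Or.inr (by rw [mul_assoc, hmove k, ← mul_assoc, ← zpow_add, sub_eq_add_neg])⟩
        · refine ⟨j - k, Or.inl ?_⟩
          rw [mul_assoc, ← mul_assoc s, hmove k, mul_assoc, hss, mul_one, ← zpow_add,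
            sub_eq_add_neg]
      inv_mem' := by
        rintro x ⟨k, rfl | rfl⟩
        · exact ⟨-k, Or.inl (by rw [zpow_neg])⟩
        · refine ⟨k, Or.inr ?_⟩
          rw [mul_inv_rev, hs.inv, ← zpow_neg, hmove (-k), neg_neg] }
  have hsK : s ∈ K := ⟨0, Or.inr (by rw [zpow_zero, one_mul])⟩
  have htK : t ∈ K := by
    refine ⟨-1, Or.inr ?_⟩
    rw [zpow_neg_one, mul_inv_rev, hs.inv, mul_assoc, hss, mul_one, ht.inv]
  have hclosure : Subgroup.closure {s, t} ≤ K := by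
    rw [Subgroup.closure_le]
    rintro x (rfl | rfl)
    exacts [hsK, htK]
  -- parity: no (s*t)^k is a reflection
  have hpar : ∀ u : W, cs.IsReflection u → cs.lengthParity u = Multiplicative.ofAdd 1 := by
    intro u hu
    rw [cs.lengthParity_eq_ofAdd_length]
    exact congrArg Multiplicative.ofAdd (ZMod.natCast_eq_one_iff_odd.2 hu.odd_length)
  have hkey : ∀ k : ℤ, ¬ cs.IsReflection ((s * t) ^ k) := by
    intro k hx
    have h2 : cs.lengthParity ((s * t) ^ k) = 1 := by
      have hone : (Multiplicative.ofAdd (1 : ZMod 2)) * Multiplicative.ofAdd (1 : ZMod 2) = 1 := by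
        decide
      rw [map_zpow, map_mul, hpar s hs, hpar t ht, hone, one_zpow]
    rw [hpar _ hx] at h2
    exact absurd (ofAdd_eq_one.mp h2) (by decide)
  refine ⟨?_, ?_, ?_⟩
  · -- each entry is a reflection in the subgroup
    intro x hx
    simp only [rhoWord, List.mem_map, List.mem_range] at hx
    obtain ⟨k, -, rfl⟩ := hx
    constructor
    · have := hr_refl (k : ℤ)
      rwa [zpow_natCast] at this
    · have hsc : s ∈ Subgroup.closure ({s, t} : Set W) :=
        Subgroup.subset_closure (by simp)
      have htc : t ∈ Subgroup.closure ({s, t} : Set W) :=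
        Subgroup.subset_closure (by simp)
      exact Subgroup.mul_mem _ (Subgroup.pow_mem _ (Subgroup.mul_mem _ hsc htc) k) hsc
  · -- nodup
    refine List.Nodup.map_on ?_ List.nodup_range
    intro a ha b hb hab
    have : (s * t) ^ a = (s * t) ^ b := mul_right_cancel hab
    exact pow_injOn_Iio_orderOf (List.mem_range.mp ha) (List.mem_range.mp hb) this
  · -- completeness
    intro x hx hxc
    obtain ⟨k, hk | hk⟩ := hclosure hxc
    · exact absurd (hk ▸ hx) (hkey k)
    · have hm' : (0 : ℤ) < (orderOf (s * t) : ℤ) := by exact_mod_cast hm0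
      have hnn : 0 ≤ k % (orderOf (s * t) : ℤ) := Int.emod_nonneg k (by omega)
      have hlt : k % (orderOf (s * t) : ℤ) < (orderOf (s * t) : ℤ) := Int.emod_lt_of_pos k hm'
      set n := (k % (orderOf (s * t) : ℤ)).toNat with hn
      have hn_lt : n < orderOf (s * t) := by omega
      have hxeq : x = (s * t) ^ n * s := by
        rw [hk]
        congr 1
        have hcast : (n : ℤ) = k % (orderOf (s * t) : ℤ) := by omega
        rw [← zpow_mod_orderOf (s * t) k, ← hcast, zpow_natCast]
      simp only [rhoWord, List.mem_map, List.mem_range]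
      exact ⟨n, hn_lt, hxeq.symm⟩
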